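/- Let F = {f_1,...,f_k} be commuting locally ad-nilpotent elements of an algebra U and D_F U the Ore localization. For x = (x_1,...,x_k) ∈ C^k define Θ_F^x(u) = Σ_{i_1,...,i_k ≥ 0} C(x_1,i_1)···C(x_k,i_k) ad(f_1)^{i_1}···ad(f_k)^{i_k}(u) f_1^{−i_1}···f_k^{−i_k}, where C(x,i) = x(x−1)···(x−i+1)/i!. Then Θ_F^x is an algebra automorphism of D_F U and Θ_F^x ∘ Θ_F^y = Θ_F^{x+y} for all x, y ∈ C^k. -/

import Mathlib

/-- Generalized binomial coefficient `C(x,i) = x(x-1)⋯(x-i+1)/i!`. -/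
noncomputable def genBinom (x : ℂ) (i : ℕ) : ℂ :=
  (∏ j ∈ Finset.range i, (x - (j : ℂ))) / (i.factorial : ℂ)

/-- `ad g : u ↦ g*u - u*g` as a ℂ-linear endomorphism. -/
noncomputable def adE {L : Type*} [Ring L] [Algebra ℂ L] (g : L) : Module.End ℂ L :=
  LinearMap.mulLeft ℂ g - LinearMap.mulRight ℂ g

/-- Iterated adjoint action `ad(f 1)^{m 1} ⋯ ad(f k)^{m k}` for a multi-index `m`. -/
noncomputable def multiAd {L : Type*} [Ring L] [Algebra ℂ L] {k : ℕ}
    (f : Fin k → Lˣ) (m : Fin k → ℕ) : Module.End ℂ L :=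
  (List.ofFn fun i => (adE ((f i : L))) ^ (m i)).prod

/-- `f 1 ^ (-m 1) ⋯ f k ^ (-m k)`. -/
noncomputable def invPow {L : Type*} [Ring L] [Algebra ℂ L] {k : ℕ}
    (f : Fin k → Lˣ) (m : Fin k → ℕ) : L :=
  (List.ofFn fun i => ((((f i)⁻¹ : Lˣ) : L)) ^ (m i)).prod

/-- The truncation (up to multi-indices `< N`) of the defining sum
`Θ_F^x(u) = Σ C(x_1,i_1)⋯C(x_k,i_k) ad(f_1)^{i_1}⋯ad(f_k)^{i_k}(u) f^{-i}`. -/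
noncomputable def thetaSum {L : Type*} [Ring L] [Algebra ℂ L] {k : ℕ}
    (f : Fin k → Lˣ) (x : Fin k → ℂ) (N : ℕ) (u : L) : L :=
  ∑ m ∈ Fintype.piFinset (fun _ : Fin k => Finset.range N),
    (∏ i, genBinom (x i) (m i)) • (multiAd f m u * invPow f m)

open Finset

/-- triangle-to-box summation lemma -/
lemma box_sum {M : Type*} [AddCommMonoid M] (N : ℕ) (T : ℕ → ℕ → M)
    (hT : ∀ a b, N ≤ a ∨ N ≤ b → T a b = 0) :
    ∑ n ∈ range (2*N), ∑ ij ∈ antidiagonal n, T ij.1 ij.2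
      = ∑ a ∈ range N, ∑ b ∈ range N, T a b := by
  have hdisj : (↑(range (2*N)) : Set ℕ).PairwiseDisjoint (fun n => antidiagonal n) := by
    intro m _ n _ hmn
    simp only [Function.onFun, Finset.disjoint_left]
    intro p hp hp'
    exact hmn ((Finset.HasAntidiagonal.mem_antidiagonal.mp hp).symm.trans (Finset.HasAntidiagonal.mem_antidiagonal.mp hp'))
  rw [show (∑ n ∈ range (2*N), ∑ ij ∈ antidiagonal n, T ij.1 ij.2)
      = ∑ p ∈ (range (2*N)).biUnion (fun n => antidiagonal n), T p.1 p.2 from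
      (Finset.sum_biUnion hdisj).symm]
  rw [← Finset.sum_product']
  have h1 : ∑ p ∈ (range (2*N)).biUnion (fun n => antidiagonal n), T p.1 p.2
      = ∑ p ∈ range (2*N) ×ˢ range (2*N), T p.1 p.2 := by
    apply Finset.sum_subset
    · intro p hp
      simp only [Finset.mem_biUnion] at hp
      obtain ⟨n, hn, hpn⟩ := hp
      have h := Finset.HasAntidiagonal.mem_antidiagonal.mp hpn
      have hn' := mem_range.mp hn
      simp only [mem_product, mem_range]
      omega
    · intro p hp hnp
      by_cases h : N ≤ p.1 ∨ N ≤ p.2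
      · exact hT _ _ h
      · exfalso
        push_neg at h
        apply hnp
        simp only [Finset.mem_biUnion]
        exact ⟨p.1 + p.2, mem_range.mpr (by omega), by simp [Finset.HasAntidiagonal.mem_antidiagonal]⟩
  have h2 : ∑ p ∈ range N ×ˢ range N, T p.1 p.2
      = ∑ p ∈ range (2*N) ×ˢ range (2*N), T p.1 p.2 := by
    apply Finset.sum_subset
    · exact Finset.product_subset_product (range_subset_range.mpr (by omega))
        (range_subset_range.mpr (by omega))
    · intro p hp hnp
      simp only [mem_product, mem_range, not_and_or, not_lt] at hnp
      exact hT _ _ hnp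
  rw [h1, h2]

lemma sum_piFinset_succ {M : Type*} [AddCommMonoid M] {k : ℕ} (s : Finset ℕ)
    (F : (Fin (k+1) → ℕ) → M) :
    ∑ m ∈ Fintype.piFinset (fun _ : Fin (k+1) => s), F m
      = ∑ n ∈ s, ∑ m' ∈ Fintype.piFinset (fun _ : Fin k => s), F (Fin.cons n m') := by
  rw [← Finset.sum_product']
  apply Finset.sum_nbij' (i := fun m => ((m 0 : ℕ), Fin.tail m))
    (j := fun p => Fin.cons p.1 p.2)
  · intro m hm
    rw [Fin.mem_piFinset_iff_zero_tail] at hm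
    simp only [mem_product]
    exact hm
  · intro p hp
    simp only [mem_product] at hp
    rw [Fin.mem_piFinset_iff_zero_tail]
    simpa [Fin.tail_cons, Fin.tail] using hp
  · intro m _; exact Fin.cons_self_tail m
  · intro p _; simp [Fin.tail_cons]
  · intro m _
    rw [show Fin.cons ((fun m => ((m 0 : ℕ), Fin.tail m)) m).1 ((fun m => ((m 0 : ℕ), Fin.tail m)) m).2 = m from Fin.cons_self_tail m]

section SingleOp
variable {L : Type*} [Ring L] [Algebra ℂ L]

lemma adE_apply (a u : L) : adE a u = a * u - u * a := rfl

lemma adE_mul (a u v : L) : adE a (u*v) = adE a u * v + u * adE a v := by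
  simp only [adE_apply]; noncomm_ring

lemma adE_mul_const {a c : L} (h : a * c = c * a) (u : L) :
    adE a (u * c) = adE a u * c := by
  simp only [adE_apply, sub_mul, mul_assoc, ← h]

lemma adE_pow_mul_const {a c : L} (h : a * c = c * a) (n : ℕ) (u : L) :
    ((adE a)^n) (u * c) = ((adE a)^n) u * c := by
  induction n generalizing u with
  | zero => simp
  | succ n ih =>
      rw [pow_succ, Module.End.mul_apply, Module.End.mul_apply, adE_mul_const h]
      exact ih _

lemma unit_inv_comm (g : Lˣ) : (g:L) * ((g⁻¹:Lˣ):L) = ((g⁻¹:Lˣ):L) * (g:L) := by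
  rw [Units.mul_inv, Units.inv_mul]

lemma unit_inv_pow_comm (g : Lˣ) (m : ℕ) :
    (g:L) * (((g⁻¹:Lˣ):L))^m = (((g⁻¹:Lˣ):L))^m * (g:L) :=
  ((Commute.refl (g:L)).units_inv_right.pow_right m).eq

noncomputable def Eop (g : Lˣ) : Module.End ℂ L :=
  (LinearMap.mulRight ℂ (((g⁻¹:Lˣ)):L)) ∘ₗ (adE (g : L))

lemma Eop_apply (g : Lˣ) (u : L) : Eop g u = adE (g:L) u * ((g⁻¹:Lˣ):L) := rfl

lemma Eop_pow_apply (g : Lˣ) (n : ℕ) (u : L) :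
    ((Eop g)^n) u = ((adE (g:L))^n) u * (((g⁻¹:Lˣ):L))^n := by
  induction n with
  | zero => simp
  | succ n ih =>
      rw [pow_succ', Module.End.mul_apply, ih, Eop_apply,
        adE_mul_const (unit_inv_pow_comm g n), mul_assoc, ← pow_succ,
        ← Module.End.mul_apply, ← pow_succ']

lemma pow_apply_zero_mono {E : Module.End ℂ L} {u : L} {N m : ℕ} (h : N ≤ m)
    (hu : (E^N) u = 0) : (E^m) u = 0 := by
  rw [← Nat.sub_add_cancel h, pow_add, Module.End.mul_apply, hu, map_zero]

lemma Eop_pow_zero (g : Lˣ) {u : L} {N : ℕ} (hu : ((adE (g:L))^N) u = 0) {m : ℕ}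
    (h : N ≤ m) : ((Eop g)^m) u = 0 := by
  rw [Eop_pow_apply, pow_apply_zero_mono h hu, zero_mul]

end SingleOp

section Theta
variable {L : Type*} [Ring L] [Algebra ℂ L]

noncomputable def th (g : Lˣ) (x : ℂ) (N : ℕ) (u : L) : L :=
  ∑ n ∈ range N, genBinom x n • (((Eop g)^n) u)

lemma genBinom_zero_right (x : ℂ) : genBinom x 0 = 1 := by simp [genBinom]

lemma th_stable (g : Lˣ) (x : ℂ) {u : L} {M N : ℕ} (hu : ((adE (g:L))^M) u = 0)
    (h : M ≤ N) : th g x N u = th g x M u := by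
  refine (Finset.sum_subset (range_subset_range.mpr h) fun n _ hn => ?_).symm
  rw [Eop_pow_zero g hu (by simpa using hn), smul_zero]

noncomputable def theta (g : Lˣ) (hg : ∀ u : L, ∃ N, ((adE (g:L))^N) u = 0)
    (x : ℂ) (u : L) : L :=
  th g x (hg u).choose u

lemma theta_eq (g : Lˣ) (hg : ∀ u : L, ∃ N, ((adE (g:L))^N) u = 0) (x : ℂ)
    {u : L} {N : ℕ} (hu : ((adE (g:L))^N) u = 0) : theta g hg x u = th g x N u := by
  have h0 := (hg u).choose_spec
  calc th g x (hg u).choose u = th g x (max N (hg u).choose) u :=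
        (th_stable g x h0 (le_max_right _ _)).symm
    _ = th g x N u := th_stable g x hu (le_max_left _ _)

lemma theta_add (g : Lˣ) (hg : ∀ u : L, ∃ N, ((adE (g:L))^N) u = 0) (x : ℂ)
    (u v : L) : theta g hg x (u + v) = theta g hg x u + theta g hg x v := by
  obtain ⟨Nu, hu⟩ := hg u
  obtain ⟨Nv, hv⟩ := hg v
  have hu' : ((adE (g:L))^(max Nu Nv)) u = 0 := pow_apply_zero_mono (le_max_left _ _) hu
  have hv' : ((adE (g:L))^(max Nu Nv)) v = 0 := pow_apply_zero_mono (le_max_right _ _) hv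
  have huv : ((adE (g:L))^(max Nu Nv)) (u+v) = 0 := by rw [map_add, hu', hv', add_zero]
  rw [theta_eq g hg x huv, theta_eq g hg x hu', theta_eq g hg x hv']
  simp [th, map_add, smul_add, Finset.sum_add_distrib]

lemma theta_smul (g : Lˣ) (hg : ∀ u : L, ∃ N, ((adE (g:L))^N) u = 0) (x : ℂ)
    (c : ℂ) (u : L) : theta g hg x (c • u) = c • theta g hg x u := by
  obtain ⟨Nu, hu⟩ := hg u
  have hcu : ((adE (g:L))^Nu) (c • u) = 0 := by rw [map_smul, hu, smul_zero]
  rw [theta_eq g hg x hcu, theta_eq g hg x hu]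
  simp [th, map_smul, Finset.smul_sum, smul_comm c]

lemma theta_one (g : Lˣ) (hg : ∀ u : L, ∃ N, ((adE (g:L))^N) u = 0) (x : ℂ) :
    theta g hg x 1 = 1 := by
  have h1 : ((adE (g:L))^1) (1:L) = 0 := by
    simp [adE_apply]
  rw [theta_eq g hg x h1]
  simp [th, genBinom_zero_right]

lemma genBinom_zero_left (i : ℕ) : genBinom 0 i = if i = 0 then 1 else 0 := by
  cases i with
  | zero => simp [genBinom]
  | succ n =>
      simp only [genBinom, Nat.succ_ne_zero, if_false]
      rw [div_eq_zero_iff]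
      left
      exact prod_eq_zero (mem_range.mpr (Nat.succ_pos n)) (by simp)

lemma theta_zero (g : Lˣ) (hg : ∀ u : L, ∃ N, ((adE (g:L))^N) u = 0) (u : L) :
    theta g hg 0 u = u := by
  obtain ⟨N, hu⟩ := hg u
  rw [theta_eq g hg 0 hu]
  rcases Nat.eq_zero_or_pos N with h | h
  · subst h
    simp only [pow_zero, Module.End.one_apply] at hu
    simp [th, hu]
  · unfold th
    have : ∀ n ∈ range N, genBinom 0 n • (((Eop g)^n) u)
        = if n = 0 then ((Eop g)^n) u else 0 := by
      intro n _
      rw [genBinom_zero_left]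
      split <;> simp
    rw [Finset.sum_congr rfl this, Finset.sum_ite_eq' (range N) 0]
    simp [mem_range.mpr h]

lemma adE_Eop_commute (g : Lˣ) :
    Commute ((adE (g:L)) : Module.End ℂ L) (Eop g) := by
  apply LinearMap.ext; intro w
  show adE (g:L) (Eop g w) = Eop g (adE (g:L) w)
  rw [Eop_apply, Eop_apply, adE_mul_const (unit_inv_comm g)]

lemma descPoch_smeval (x : ℂ) (i : ℕ) :
    (descPochhammer ℤ i).smeval x = ∏ j ∈ Finset.range i, (x - (j : ℂ)) := by
  induction i with
  | zero => simp [descPochhammer_zero, Polynomial.smeval_one]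
  | succ n ih =>
      rw [descPochhammer_succ_right, Polynomial.smeval_mul, ih, prod_range_succ]
      congr 1
      rw [Polynomial.smeval_sub, Polynomial.smeval_X]
      push_cast
      simp [Polynomial.smeval_natCast]

lemma genBinom_eq_choose (x : ℂ) (i : ℕ) : genBinom x i = Ring.choose x i := by
  have h := Ring.descPochhammer_eq_factorial_smul_choose x i
  rw [descPoch_smeval] at h
  have hf : (i.factorial : ℂ) ≠ 0 := Nat.cast_ne_zero.mpr (Nat.factorial_ne_zero i)
  rw [genBinom, h, nsmul_eq_mul]
  field_simp


lemma genBinom_vandermonde (x y : ℂ) (p : ℕ) :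
    ∑ ij ∈ antidiagonal p, genBinom x ij.1 * genBinom y ij.2 = genBinom (x + y) p := by
  simp only [genBinom_eq_choose]
  exact (Ring.add_choose_eq p (Commute.all x y)).symm

lemma genBinom_mul (x : ℂ) (a q : ℕ) :
    genBinom x a * genBinom (x - a) q = ((a + q).choose a : ℂ) * genBinom x (a + q) := by
  have hprod : (∏ j ∈ range (a + q), (x - (j : ℂ)))
      = (∏ j ∈ range a, (x - (j : ℂ))) * ∏ j ∈ range q, (x - (a:ℂ) - (j : ℂ)) := by
    rw [prod_range_add]
    congr 1
    refine prod_congr rfl fun j _ => ?_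
    push_cast; ring
  have hfac : ((a+q).factorial : ℂ) = ((a+q).choose a : ℂ) * (a.factorial : ℂ) * (q.factorial : ℂ) := by
    rw [← Nat.cast_mul, ← Nat.cast_mul]
    congr 1
    have := Nat.choose_mul_factorial_mul_factorial (Nat.le_add_right a q)
    simpa [Nat.add_sub_cancel_left] using this.symm
  have ha : (a.factorial : ℂ) ≠ 0 := Nat.cast_ne_zero.mpr (Nat.factorial_ne_zero a)
  have hq : (q.factorial : ℂ) ≠ 0 := Nat.cast_ne_zero.mpr (Nat.factorial_ne_zero q)
  have haq : ((a+q).factorial : ℂ) ≠ 0 := Nat.cast_ne_zero.mpr (Nat.factorial_ne_zero _)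
  have hc : ((a+q).choose a : ℂ) ≠ 0 := Nat.cast_ne_zero.mpr (Nat.choose_pos (Nat.le_add_right a q)).ne'
  rw [genBinom, genBinom, genBinom, hprod, hfac]
  field_simp

lemma genBinom_neg_one (i : ℕ) : genBinom (-1) i = (-1)^i := by
  have : ∏ j ∈ range i, ((-1:ℂ) - (j : ℂ)) = (-1)^i * (i.factorial : ℂ) := by
    induction i with
    | zero => simp
    | succ n ih =>
        rw [prod_range_succ, ih, Nat.factorial_succ]
        push_cast; ring
  rw [genBinom, this]
  have hf : (i.factorial : ℂ) ≠ 0 := Nat.cast_ne_zero.mpr (Nat.factorial_ne_zero i)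
  field_simp


lemma theta_comp (g : Lˣ) (hg : ∀ u : L, ∃ N, ((adE (g:L))^N) u = 0) (x y : ℂ)
    (u : L) : theta g hg x (theta g hg y u) = theta g hg (x + y) u := by
  obtain ⟨N, hu⟩ := hg u
  have hEop : ∀ m, N ≤ m → ((Eop g)^m) u = 0 := fun m hm => Eop_pow_zero g hu hm
  have hth : ((adE (g:L))^N) (th g y N u) = 0 := by
    unfold th
    rw [map_sum]
    refine Finset.sum_eq_zero fun n _ => ?_
    rw [map_smul, ← Module.End.mul_apply, ((adE_Eop_commute g).pow_pow N n).eq,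
      Module.End.mul_apply, hu, map_zero, smul_zero]
  rw [theta_eq g hg y hu, theta_eq g hg x hth,
    theta_eq g hg (x+y) (pow_apply_zero_mono (Nat.le_mul_of_pos_left N (by norm_num)) hu :
      ((adE (g:L))^(2*N)) u = 0)]
  unfold th
  -- LHS: double sum
  have lhs_eq : ∑ m ∈ range N, genBinom x m •
        (((Eop g)^m) (∑ n ∈ range N, genBinom y n • (((Eop g)^n) u)))
      = ∑ m ∈ range N, ∑ n ∈ range N,
          (genBinom x m * genBinom y n) • (((Eop g)^(m+n)) u) := by
    refine Finset.sum_congr rfl fun m _ => ?_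
    rw [map_sum, Finset.smul_sum]
    refine Finset.sum_congr rfl fun n _ => ?_
    rw [map_smul, smul_smul, ← Module.End.mul_apply, ← pow_add]
  rw [lhs_eq]
  -- RHS via box_sum
  rw [← box_sum N (fun a b => (genBinom x a * genBinom y b) • (((Eop g)^(a+b)) u))
    (fun a b hab => by
      show (genBinom x a * genBinom y b) • (((Eop g)^(a+b)) u) = 0
      rw [hEop (a+b) (by omega), smul_zero])]
  refine Finset.sum_congr rfl fun p _ => ?_
  rw [← genBinom_vandermonde, Finset.sum_smul]
  refine Finset.sum_congr rfl fun ij hij => ?_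
  rw [Finset.HasAntidiagonal.mem_antidiagonal.mp hij]

lemma adE_pow_leibniz (a : L) (n : ℕ) (u v : L) :
    ((adE a)^n) (u*v) = ∑ ij ∈ antidiagonal n,
      n.choose ij.1 • (((adE a)^ij.1) u * ((adE a)^ij.2) v) := by
  induction n with
  | zero => simp
  | succ n ih =>
    have hD : ∀ (p q : ℕ), adE a (((adE a)^p) u * ((adE a)^q) v)
        = ((adE a)^(p+1)) u * ((adE a)^q) v + ((adE a)^p) u * ((adE a)^(q+1)) v := by
      intro p q
      rw [adE_mul, pow_succ', pow_succ', Module.End.mul_apply, Module.End.mul_apply]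
    have h1 := Finset.Nat.sum_antidiagonal_succ (n := n)
      (f := fun p => n.choose p.1 • (((adE a)^p.1) u * ((adE a)^p.2) v))
    have h2 := Finset.Nat.sum_antidiagonal_succ' (n := n)
      (f := fun p => n.choose p.1 • (((adE a)^p.1) u * ((adE a)^p.2) v))
    simp only [Nat.choose_succ_self, zero_smul, zero_add, Nat.choose_zero_right, one_smul] at h1 h2
    have key : ∑ p ∈ antidiagonal n, n.choose p.1 • (((adE a)^p.1) u * ((adE a)^(p.2+1)) v)
        = (((adE a)^0) u * ((adE a)^(n+1)) v)
          + ∑ p ∈ antidiagonal n, n.choose (p.1+1) • (((adE a)^(p.1+1)) u * ((adE a)^p.2) v) := by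
      rw [← h2, h1]
    have hterm : ∀ p ∈ antidiagonal n,
        adE a (n.choose p.1 • (((adE a)^p.1) u * ((adE a)^p.2) v))
        = n.choose p.1 • (((adE a)^(p.1+1)) u * ((adE a)^p.2) v)
          + n.choose p.1 • (((adE a)^p.1) u * ((adE a)^(p.2+1)) v) := by
      intro p _
      rw [map_nsmul, hD, smul_add]
    rw [pow_succ', Module.End.mul_apply, ih, map_sum, Finset.sum_congr rfl hterm,
      Finset.sum_add_distrib, key,
      Finset.Nat.sum_antidiagonal_succ
        (f := fun p => (n+1).choose p.1 • (((adE a)^p.1) u * ((adE a)^p.2) v))]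
    simp only [Nat.choose_succ_succ, add_smul, Finset.sum_add_distrib, Nat.choose_zero_right,
      one_smul]
    abel

lemma inv_mul_expand (g : Lˣ) : ∀ {M : ℕ} {w : L}, ((adE (g:L))^M) w = 0 →
    ((g⁻¹:Lˣ):L) * w = ∑ i ∈ range M,
      genBinom (-1) i • (((adE (g:L))^i) w * (((g⁻¹:Lˣ):L))^(1+i)) := by
  intro M
  induction M with
  | zero =>
      intro w hw
      simp only [pow_zero, Module.End.one_apply] at hw
      simp [hw]
  | succ M ih =>
      intro w hw
      have key : ((g⁻¹:Lˣ):L) * w = w * ((g⁻¹:Lˣ):L)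
          - ((g⁻¹:Lˣ):L) * (adE (g:L) w) * ((g⁻¹:Lˣ):L) := by
        simp only [adE_apply, mul_sub, sub_mul, mul_assoc, Units.inv_mul_cancel_left,
          Units.mul_inv_cancel_left, Units.mul_inv, Units.inv_mul, mul_one]
        abel
      have hDw : ((adE (g:L))^M) (adE (g:L) w) = 0 := by
        rw [← Module.End.mul_apply, ← pow_succ]; exact hw
      rw [key, ih hDw, Finset.sum_mul, Finset.sum_range_succ']
      have hzero : genBinom (-1) 0 • (((adE (g:L))^0) w * (((g⁻¹:Lˣ):L))^(1+0)) =
          w * ((g⁻¹:Lˣ):L) := by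
        simp [genBinom_zero_right]
      rw [hzero]
      have hterm : ∀ i ∈ range M,
          genBinom (-1) i • (((adE (g:L))^i) (adE (g:L) w) * (((g⁻¹:Lˣ):L))^(1+i))
            * ((g⁻¹:Lˣ):L)
          = - (genBinom (-1) (i+1) • (((adE (g:L))^(i+1)) w * (((g⁻¹:Lˣ):L))^(1+(i+1)))) := by
        intro i _
        rw [smul_mul_assoc, mul_assoc, ← pow_succ, ← Module.End.mul_apply, ← pow_succ,
          genBinom_neg_one, genBinom_neg_one,
          show (1 + i + 1) = (1 + (i+1)) from by omega,
          show ((-1:ℂ))^(i+1) = -((-1:ℂ))^i from by ring, neg_smul, neg_neg]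
      rw [Finset.sum_congr rfl hterm, Finset.sum_neg_distrib]
      abel

lemma inv_pow_mul_expand (g : Lˣ) (a : ℕ) : ∀ {M : ℕ} {w : L}, ((adE (g:L))^M) w = 0 →
    (((g⁻¹:Lˣ):L))^a * w = ∑ i ∈ range M,
      genBinom (-(a:ℂ)) i • (((adE (g:L))^i) w * (((g⁻¹:Lˣ):L))^(a+i)) := by
  induction a with
  | zero =>
      intro M w hw
      simp only [Nat.cast_zero, neg_zero, pow_zero, one_mul, zero_add]
      rcases Nat.eq_zero_or_pos M with h | h
      · subst h
        simp only [pow_zero, Module.End.one_apply] at hw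
        simp [hw]
      · have : ∀ n ∈ range M, genBinom 0 n • (((adE (g:L))^n) w * (((g⁻¹:Lˣ):L))^n)
            = if n = 0 then ((adE (g:L))^n) w * (((g⁻¹:Lˣ):L))^n else 0 := by
          intro n _
          rw [genBinom_zero_left]
          split <;> simp
        rw [Finset.sum_congr rfl this, Finset.sum_ite_eq' (range M) 0]
        simp [mem_range.mpr h]
  | succ a ih =>
      intro M w hw
      have h1 : (((g⁻¹:Lˣ):L))^(a+1) * w = (((g⁻¹:Lˣ):L))^a * (((g⁻¹:Lˣ):L) * w) := by
        rw [pow_succ, mul_assoc]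
      rw [h1, inv_mul_expand g hw, Finset.mul_sum]
      have hterm : ∀ i ∈ range M,
          (((g⁻¹:Lˣ):L))^a * (genBinom (-1) i • (((adE (g:L))^i) w * (((g⁻¹:Lˣ):L))^(1+i)))
          = ∑ j ∈ range M, (genBinom (-1) i * genBinom (-(a:ℂ)) j) •
              (((adE (g:L))^(i+j)) w * (((g⁻¹:Lˣ):L))^((a+1)+(i+j))) := by
        intro i _
        have hDi : ((adE (g:L))^M) (((adE (g:L))^i) w) = 0 := by
          rw [← Module.End.mul_apply, ← pow_add]
          exact pow_apply_zero_mono (Nat.le_add_right M i) hw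
        rw [mul_smul_comm, ← mul_assoc, ih hDi, Finset.sum_mul, Finset.smul_sum]
        refine Finset.sum_congr rfl fun j _ => ?_
        rw [smul_mul_assoc, smul_smul, mul_assoc, ← pow_add, ← Module.End.mul_apply, ← pow_add,
          show (a + j + (1 + i)) = ((a+1)+(i+j)) from by omega,
          show (j + i) = (i + j) from by omega]
      rw [Finset.sum_congr rfl hterm]
      -- now a double sum; convert via box_sum
      have hbox := box_sum M (fun i j => (genBinom (-1) i * genBinom (-(a:ℂ)) j) •
              (((adE (g:L))^(i+j)) w * (((g⁻¹:Lˣ):L))^((a+1)+(i+j))))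
        (fun i j hij => by
          show (genBinom (-1) i * genBinom (-(a:ℂ)) j) •
              (((adE (g:L))^(i+j)) w * (((g⁻¹:Lˣ):L))^((a+1)+(i+j))) = 0
          rw [pow_apply_zero_mono (by omega : M ≤ i + j) hw, zero_mul, smul_zero])
      rw [← hbox]
      have hmid : ∀ n ∈ range (2*M),
          (∑ ij ∈ antidiagonal n, (genBinom (-1) ij.1 * genBinom (-(a:ℂ)) ij.2) •
              (((adE (g:L))^(ij.1+ij.2)) w * (((g⁻¹:Lˣ):L))^((a+1)+(ij.1+ij.2))))
          = genBinom (-((a+1:ℕ):ℂ)) n • (((adE (g:L))^n) w * (((g⁻¹:Lˣ):L))^((a+1)+n)) := by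
        intro n _
        have : ∀ ij ∈ antidiagonal n,
            (genBinom (-1) ij.1 * genBinom (-(a:ℂ)) ij.2) •
              (((adE (g:L))^(ij.1+ij.2)) w * (((g⁻¹:Lˣ):L))^((a+1)+(ij.1+ij.2)))
            = (genBinom (-1) ij.1 * genBinom (-(a:ℂ)) ij.2) •
              (((adE (g:L))^n) w * (((g⁻¹:Lˣ):L))^((a+1)+n)) := by
          intro ij hij
          rw [Finset.HasAntidiagonal.mem_antidiagonal.mp hij]
        rw [Finset.sum_congr rfl this, ← Finset.sum_smul, genBinom_vandermonde]
        congr 2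
        push_cast
        ring
      rw [Finset.sum_congr rfl hmid]
      -- shrink range 2M to M
      refine (Finset.sum_subset (range_subset_range.mpr (by omega)) fun n _ hn => ?_).symm
      rw [pow_apply_zero_mono (by simpa using hn : M ≤ n) hw, zero_mul, smul_zero]

lemma theta_mul (g : Lˣ) (hg : ∀ u : L, ∃ N, ((adE (g:L))^N) u = 0) (x : ℂ) (u v : L) :
    theta g hg x (u * v) = theta g hg x u * theta g hg x v := by
  obtain ⟨Nu, hu0⟩ := hg u
  obtain ⟨Nv, hv0⟩ := hg v
  have hu : ((adE (g:L))^(max Nu Nv)) u = 0 := pow_apply_zero_mono (le_max_left _ _) hu0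
  have hv : ((adE (g:L))^(max Nu Nv)) v = 0 := pow_apply_zero_mono (le_max_right _ _) hv0
  set N := max Nu Nv with hN
  have hu' : ∀ {m}, N ≤ m → ((adE (g:L))^m) u = 0 := fun h => pow_apply_zero_mono h hu
  have hv' : ∀ {m}, N ≤ m → ((adE (g:L))^m) v = 0 := fun h => pow_apply_zero_mono h hv
  have huv : ((adE (g:L))^(2*N)) (u*v) = 0 := by
    rw [adE_pow_leibniz]
    refine Finset.sum_eq_zero fun ij hij => ?_
    have hsum := Finset.HasAntidiagonal.mem_antidiagonal.mp hij
    rcases le_or_gt N ij.1 with h | h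
    · rw [hu' h, zero_mul, smul_zero]
    · rw [hv' (by omega), mul_zero, smul_zero]
  rw [theta_eq g hg x huv, theta_eq g hg x hu, theta_eq g hg x hv]
  unfold th
  have hT : ∀ p q : ℕ, N ≤ p ∨ N ≤ q →
      ((((p+q).choose p : ℂ)) * genBinom x (p+q)) •
        (((adE (g:L))^p) u * (((adE (g:L))^q) v * (((g⁻¹:Lˣ):L))^(p+q))) = 0 := by
    intro p q h
    rcases h with h | h
    · rw [hu' h, zero_mul, smul_zero]
    · rw [hv' h, zero_mul, mul_zero, smul_zero]
  have lhs_eq : ∑ n ∈ range (2*N), genBinom x n • (((Eop g)^n) (u*v))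
      = ∑ p ∈ range N, ∑ q ∈ range N,
          ((((p+q).choose p : ℂ)) * genBinom x (p+q)) •
            (((adE (g:L))^p) u * (((adE (g:L))^q) v * (((g⁻¹:Lˣ):L))^(p+q))) := by
    rw [← box_sum N _ hT]
    refine Finset.sum_congr rfl fun n _ => ?_
    rw [Eop_pow_apply, adE_pow_leibniz, Finset.sum_mul, Finset.smul_sum]
    refine Finset.sum_congr rfl fun ij hij => ?_
    have hsum := Finset.HasAntidiagonal.mem_antidiagonal.mp hij
    rw [smul_mul_assoc, ← Nat.cast_smul_eq_nsmul ℂ, smul_smul, ← hsum, mul_comm (genBinom x _),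
      mul_assoc]
  have rhs_eq : (∑ p ∈ range N, genBinom x p • (((Eop g)^p) u))
        * (∑ q ∈ range N, genBinom x q • (((Eop g)^q) v))
      = ∑ p ∈ range N, ∑ q ∈ range N,
          ((((p+q).choose p : ℂ)) * genBinom x (p+q)) •
            (((adE (g:L))^p) u * (((adE (g:L))^q) v * (((g⁻¹:Lˣ):L))^(p+q))) := by
    rw [Finset.sum_mul]
    refine Finset.sum_congr rfl fun p _ => ?_
    -- fixed p : compute the product of one term with the q-sum
    have inner : (genBinom x p • (((Eop g)^p) u)) * (∑ q ∈ range N, genBinom x q • (((Eop g)^q) v))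
        = ∑ q ∈ range N, ∑ i ∈ range N,
            ((genBinom x p * genBinom x q * genBinom (-(p:ℂ)) i) •
              (((adE (g:L))^p) u * (((adE (g:L))^(q+i)) v * (((g⁻¹:Lˣ):L))^(p+(q+i))))) := by
      rw [Finset.mul_sum]
      refine Finset.sum_congr rfl fun q _ => ?_
      have hDqv : ((adE (g:L))^N) (((adE (g:L))^q) v) = 0 := by
        rw [← Module.End.mul_apply, ← pow_add]
        exact hv' (Nat.le_add_right N q)
      rw [Eop_pow_apply, Eop_pow_apply, smul_mul_smul_comm, mul_assoc,
        ← mul_assoc ((((g⁻¹:Lˣ):L))^p), inv_pow_mul_expand g p hDqv, Finset.sum_mul,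
        Finset.mul_sum, Finset.smul_sum]
      refine Finset.sum_congr rfl fun i _ => ?_
      rw [smul_mul_assoc, mul_smul_comm, smul_smul, ← Module.End.mul_apply, ← pow_add,
        mul_assoc (((adE (g:L))^(i+q)) v), ← pow_add,
        show (p + i + q) = (p + (q+i)) from by omega,
        show (i + q) = (q + i) from by omega, mul_assoc]
    rw [inner]
    -- box over (q,i), then Vandermonde
    have hT2 : ∀ q i : ℕ, N ≤ q ∨ N ≤ i →
        ((genBinom x p * genBinom x q * genBinom (-(p:ℂ)) i) •
          (((adE (g:L))^p) u * (((adE (g:L))^(q+i)) v * (((g⁻¹:Lˣ):L))^(p+(q+i))))) = 0 := by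
      intro q i h
      have : ((adE (g:L))^(q+i)) v = 0 := hv' (by omega)
      rw [this, zero_mul, mul_zero, smul_zero]
    rw [← box_sum N _ hT2]
    have hmid : ∀ s ∈ range (2*N),
        (∑ ij ∈ antidiagonal s, (genBinom x p * genBinom x ij.1 * genBinom (-(p:ℂ)) ij.2) •
          (((adE (g:L))^p) u * (((adE (g:L))^(ij.1+ij.2)) v * (((g⁻¹:Lˣ):L))^(p+(ij.1+ij.2)))))
        = (genBinom x p * genBinom (x - (p:ℂ)) s) •
            (((adE (g:L))^p) u * (((adE (g:L))^s) v * (((g⁻¹:Lˣ):L))^(p+s))) := by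
      intro s _
      have : ∀ ij ∈ antidiagonal s,
          (genBinom x p * genBinom x ij.1 * genBinom (-(p:ℂ)) ij.2) •
            (((adE (g:L))^p) u * (((adE (g:L))^(ij.1+ij.2)) v * (((g⁻¹:Lˣ):L))^(p+(ij.1+ij.2))))
          = (genBinom x p * (genBinom x ij.1 * genBinom (-(p:ℂ)) ij.2)) •
            (((adE (g:L))^p) u * (((adE (g:L))^s) v * (((g⁻¹:Lˣ):L))^(p+s))) := by
        intro ij hij
        rw [Finset.HasAntidiagonal.mem_antidiagonal.mp hij, mul_assoc]
      rw [Finset.sum_congr rfl this]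
      rw [show (∑ ij ∈ antidiagonal s, (genBinom x p * (genBinom x ij.1 * genBinom (-(p:ℂ)) ij.2)) •
            (((adE (g:L))^p) u * (((adE (g:L))^s) v * (((g⁻¹:Lˣ):L))^(p+s))))
          = (∑ ij ∈ antidiagonal s, genBinom x p * (genBinom x ij.1 * genBinom (-(p:ℂ)) ij.2)) •
            (((adE (g:L))^p) u * (((adE (g:L))^s) v * (((g⁻¹:Lˣ):L))^(p+s))) from
          (Finset.sum_smul).symm, ← Finset.mul_sum, genBinom_vandermonde, sub_eq_add_neg]
    rw [Finset.sum_congr rfl hmid]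
    -- shrink the s-range from 2N to N, then apply genBinom_mul
    rw [show (∑ s ∈ range (2*N), (genBinom x p * genBinom (x - (p:ℂ)) s) •
          (((adE (g:L))^p) u * (((adE (g:L))^s) v * (((g⁻¹:Lˣ):L))^(p+s))))
        = ∑ s ∈ range N, (genBinom x p * genBinom (x - (p:ℂ)) s) •
          (((adE (g:L))^p) u * (((adE (g:L))^s) v * (((g⁻¹:Lˣ):L))^(p+s))) from
      (Finset.sum_subset (range_subset_range.mpr (by omega)) fun s _ hs => by
        rw [hv' (by simpa using hs), zero_mul, mul_zero, smul_zero]).symm]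
    refine Finset.sum_congr rfl fun q _ => ?_
    rw [genBinom_mul]
  rw [lhs_eq, rhs_eq]

noncomputable def thetaAlg (g : Lˣ) (hg : ∀ u : L, ∃ N, ((adE (g:L))^N) u = 0) (x : ℂ) :
    L ≃ₐ[ℂ] L where
  toFun := theta g hg x
  invFun := theta g hg (-x)
  left_inv := fun u => by rw [theta_comp, neg_add_cancel, theta_zero]
  right_inv := fun u => by rw [theta_comp, add_neg_cancel, theta_zero]
  map_mul' := theta_mul g hg x
  map_add' := theta_add g hg x
  commutes' := fun c => by
    show theta g hg x (algebraMap ℂ L c) = algebraMap ℂ L c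
    rw [Algebra.algebraMap_eq_smul_one, theta_smul, theta_one]

lemma thetaAlg_apply (g : Lˣ) (hg : ∀ u : L, ∃ N, ((adE (g:L))^N) u = 0) (x : ℂ) (u : L) :
    thetaAlg g hg x u = theta g hg x u := rfl

lemma adE_adE_commute {g h : L} (hgh : g * h = h * g) :
    Commute (adE g : Module.End ℂ L) (adE h) := by
  apply LinearMap.ext; intro u
  show adE g (adE h u) = adE h (adE g u)
  simp only [adE_apply, mul_sub, sub_mul, ← mul_assoc, hgh]
  rw [mul_assoc u h g, ← hgh, ← mul_assoc]
  abel

lemma adE_apply_swap {g h : L} (hgh : g * h = h * g) (u : L) :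
    adE g (adE h u) = adE h (adE g u) := by
  have := LinearMap.congr_fun (adE_adE_commute (L := L) hgh) u
  simpa [Module.End.mul_apply] using this

lemma adE_Eop_commute' {g h : Lˣ} (hgh : (g:L) * (h:L) = (h:L) * (g:L)) :
    Commute (adE (g:L) : Module.End ℂ L) (Eop h) := by
  have hc : Commute (g:L) (h:L) := hgh
  have hginv : (g:L) * ((h⁻¹:Lˣ):L) = ((h⁻¹:Lˣ):L) * (g:L) := (hc.units_inv_right).eq
  apply LinearMap.ext; intro u
  show adE (g:L) (Eop h u) = Eop h (adE (g:L) u)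
  rw [Eop_apply, Eop_apply, adE_mul_const hginv, adE_apply_swap hgh]

lemma Eop_Eop_commute {g h : Lˣ} (hgh : (g:L) * (h:L) = (h:L) * (g:L)) :
    Commute (Eop g : Module.End ℂ L) (Eop h) := by
  have hc : Commute (g:L) (h:L) := hgh
  have hinv : ((g⁻¹:Lˣ):L) * ((h⁻¹:Lˣ):L) = ((h⁻¹:Lˣ):L) * ((g⁻¹:Lˣ):L) :=
    ((hc.units_inv_right).units_inv_left).eq
  apply LinearMap.ext; intro u
  show Eop g (Eop h u) = Eop h (Eop g u)
  rw [Eop_apply, Eop_apply, Eop_apply, Eop_apply,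
    adE_mul_const (hc.units_inv_right).eq,
    adE_mul_const (hc.symm.units_inv_right).eq,
    adE_apply_swap hgh, mul_assoc, mul_assoc, ← hinv]

lemma theta_swap (g h : Lˣ) (hgl : ∀ u : L, ∃ N, ((adE (g:L))^N) u = 0)
    (hhl : ∀ u : L, ∃ N, ((adE (h:L))^N) u = 0)
    (hgh : (g:L) * (h:L) = (h:L) * (g:L)) (x y : ℂ) (u : L) :
    theta g hgl x (theta h hhl y u) = theta h hhl y (theta g hgl x u) := by
  obtain ⟨Ng, hNg⟩ := hgl u
  obtain ⟨Nh, hNh⟩ := hhl u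
  have hgu : ((adE (g:L))^(max Ng Nh)) u = 0 := pow_apply_zero_mono (le_max_left _ _) hNg
  have hhu : ((adE (h:L))^(max Ng Nh)) u = 0 := pow_apply_zero_mono (le_max_right _ _) hNh
  set N := max Ng Nh
  have key : ∀ (p q : Lˣ) (hpu : ((adE (p:L))^N) u = 0)
      (hqc : Commute (adE (p:L) : Module.End ℂ L) (Eop q)) (z : ℂ),
      ((adE (p:L))^N) (th q z N u) = 0 := by
    intro p q hpu hqc z
    unfold th
    rw [map_sum]
    refine Finset.sum_eq_zero fun n _ => ?_
    rw [map_smul, ← Module.End.mul_apply, (hqc.pow_pow N n).eq, Module.End.mul_apply,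
      hpu, map_zero, smul_zero]
  have h1 : ((adE (g:L))^N) (th h y N u) = 0 := key g h hgu (adE_Eop_commute' hgh) y
  have h2 : ((adE (h:L))^N) (th g x N u) = 0 := key h g hhu (adE_Eop_commute' hgh.symm) x
  rw [theta_eq h hhl y hhu, theta_eq g hgl x h1, theta_eq g hgl x hgu,
    theta_eq h hhl y h2]
  unfold th
  have lhs : ∑ m ∈ range N, genBinom x m •
        ((Eop g)^m) (∑ n ∈ range N, genBinom y n • (((Eop h)^n) u))
      = ∑ m ∈ range N, ∑ n ∈ range N,
          (genBinom x m * genBinom y n) • ((Eop g)^m) (((Eop h)^n) u) := by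
    refine Finset.sum_congr rfl fun m _ => ?_
    rw [map_sum, Finset.smul_sum]
    refine Finset.sum_congr rfl fun n _ => ?_
    rw [map_smul, smul_smul]
  have rhs : ∑ n ∈ range N, genBinom y n •
        ((Eop h)^n) (∑ m ∈ range N, genBinom x m • (((Eop g)^m) u))
      = ∑ n ∈ range N, ∑ m ∈ range N,
          (genBinom y n * genBinom x m) • ((Eop h)^n) (((Eop g)^m) u) := by
    refine Finset.sum_congr rfl fun n _ => ?_
    rw [map_sum, Finset.smul_sum]
    refine Finset.sum_congr rfl fun m _ => ?_
    rw [map_smul, smul_smul]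
  rw [lhs, rhs, Finset.sum_comm]
  refine Finset.sum_congr rfl fun n _ => Finset.sum_congr rfl fun m _ => ?_
  rw [mul_comm, ← Module.End.mul_apply, ← Module.End.mul_apply,
    ((Eop_Eop_commute hgh).pow_pow m n).eq]

end Theta

section Multi
variable {L : Type*} [Ring L] [Algebra ℂ L]

noncomputable def ThetaFam {k : ℕ} (f : Fin k → Lˣ)
    (hnil : ∀ i (u : L), ∃ N : ℕ, ((adE ((f i : L))) ^ N) u = 0) (x : Fin k → ℂ) :
    L ≃ₐ[ℂ] L :=
  (List.ofFn fun i => thetaAlg (f i) (hnil i) (x i)).prod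

lemma ThetaFam_zero_apply (f : Fin 0 → Lˣ) (hnil : ∀ i (u : L), ∃ N : ℕ,
    ((adE ((f i : L))) ^ N) u = 0) (x : Fin 0 → ℂ) (u : L) :
    ThetaFam f hnil x u = u := by
  rw [ThetaFam, List.ofFn_zero, List.prod_nil]
  rfl

lemma ThetaFam_succ_apply {k : ℕ} (f : Fin (k+1) → Lˣ) (hnil : ∀ i (u : L), ∃ N : ℕ,
    ((adE ((f i : L))) ^ N) u = 0) (x : Fin (k+1) → ℂ) (u : L) :
    ThetaFam f hnil x u
      = theta (f 0) (hnil 0) (x 0)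
          (ThetaFam (fun i => f i.succ) (fun i => hnil i.succ) (fun i => x i.succ) u) := by
  rw [ThetaFam, List.ofFn_succ, List.prod_cons]
  rfl

lemma theta_ThetaFam_swap : ∀ {k : ℕ} (f : Fin k → Lˣ)
    (hnil : ∀ i (u : L), ∃ N : ℕ, ((adE ((f i : L))) ^ N) u = 0)
    (g : Lˣ) (hg : ∀ u : L, ∃ N, ((adE (g:L))^N) u = 0)
    (hcg : ∀ j, (g:L) * (f j : L) = (f j : L) * (g:L))
    (x : ℂ) (y : Fin k → ℂ) (u : L),
    theta g hg x (ThetaFam f hnil y u) = ThetaFam f hnil y (theta g hg x u) := by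
  intro k
  induction k with
  | zero =>
      intro f hnil g hg hcg x y u
      rw [ThetaFam_zero_apply, ThetaFam_zero_apply]
  | succ k ih =>
      intro f hnil g hg hcg x y u
      rw [ThetaFam_succ_apply, ThetaFam_succ_apply,
        theta_swap g (f 0) hg (hnil 0) (hcg 0) x (y 0),
        ih (fun i => f i.succ) (fun i => hnil i.succ) g hg (fun j => hcg j.succ) x
          (fun i => y i.succ)]

lemma ThetaFam_comp : ∀ {k : ℕ} (f : Fin k → Lˣ)
    (hcomm : ∀ i j, (f i : L) * (f j : L) = (f j : L) * (f i : L))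
    (hnil : ∀ i (u : L), ∃ N : ℕ, ((adE ((f i : L))) ^ N) u = 0)
    (x y : Fin k → ℂ) (u : L),
    ThetaFam f hnil x (ThetaFam f hnil y u) = ThetaFam f hnil (x + y) u := by
  intro k
  induction k with
  | zero =>
      intro f hcomm hnil x y u
      rw [ThetaFam_zero_apply, ThetaFam_zero_apply, ThetaFam_zero_apply]
  | succ k ih =>
      intro f hcomm hnil x y u
      rw [ThetaFam_succ_apply, ThetaFam_succ_apply, ThetaFam_succ_apply,
        ← theta_ThetaFam_swap (fun i => f i.succ) (fun i => hnil i.succ) (f 0) (hnil 0)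
          (fun j => hcomm 0 j.succ) (y 0) (fun i => x i.succ), theta_comp,
        ih (fun i => f i.succ) (fun i j => hcomm i.succ j.succ) (fun i => hnil i.succ)
          (fun i => x i.succ) (fun i => y i.succ)]
      rfl

lemma commute_invPow (g : Lˣ) : ∀ {k : ℕ} (f : Fin k → Lˣ)
    (h : ∀ j, (g:L) * (f j : L) = (f j : L) * (g:L)) (m : Fin k → ℕ),
    Commute (g:L) (invPow f m) := by
  intro k
  induction k with
  | zero =>
      intro f h m
      rw [invPow, List.ofFn_zero, List.prod_nil]
      exact Commute.one_right _
  | succ k ih =>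
      intro f h m
      rw [invPow, List.ofFn_succ, List.prod_cons]
      have hc : Commute (g:L) ((f 0 : L)) := h 0
      exact Commute.mul_right ((hc.units_inv_right).pow_right (m 0))
        (ih (fun i => f i.succ) (fun j => h j.succ) (fun i => m i.succ))

lemma commute_multiAd (g : Lˣ) : ∀ {k : ℕ} (f : Fin k → Lˣ)
    (h : ∀ j, (g:L) * (f j : L) = (f j : L) * (g:L)) (m : Fin k → ℕ),
    Commute (adE (g:L) : Module.End ℂ L) (multiAd f m) := by
  intro k
  induction k with
  | zero =>
      intro f h m
      rw [multiAd, List.ofFn_zero, List.prod_nil]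
      exact Commute.one_right _
  | succ k ih =>
      intro f h m
      rw [multiAd, List.ofFn_succ, List.prod_cons]
      exact Commute.mul_right ((adE_adE_commute (h 0)).pow_right (m 0))
        (ih (fun i => f i.succ) (fun j => h j.succ) (fun i => m i.succ))

lemma ThetaFam_eq_thetaSum : ∀ {k : ℕ} (f : Fin k → Lˣ)
    (hcomm : ∀ i j, (f i : L) * (f j : L) = (f j : L) * (f i : L))
    (hnil : ∀ i (u : L), ∃ N : ℕ, ((adE ((f i : L))) ^ N) u = 0)
    (x : Fin k → ℂ) (u : L) (N : ℕ), (∀ i, ((adE ((f i : L)))^N) u = 0) →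
    ThetaFam f hnil x u = thetaSum f x N u := by
  intro k
  induction k with
  | zero =>
      intro f hcomm hnil x u N hu
      rw [ThetaFam_zero_apply]
      unfold thetaSum
      rw [Fintype.piFinset_of_isEmpty, Finset.univ_unique, Finset.sum_singleton]
      simp [multiAd, invPow]
  | succ k ih =>
      intro f hcomm hnil x u N hu
      rw [ThetaFam_succ_apply,
        ih (fun i => f i.succ) (fun i j => hcomm i.succ j.succ) (fun i => hnil i.succ)
          (fun i => x i.succ) u N (fun i => hu i.succ)]
      have hcinv : ∀ (m : Fin k → ℕ),
          (f 0 : L) * invPow (fun i => f i.succ) m = invPow (fun i => f i.succ) m * (f 0:L) :=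
        fun m => (commute_invPow (f 0) (fun i => f i.succ) (fun j => hcomm 0 j.succ) m).eq
      have hkill : ((adE (f 0 : L))^N)
          (thetaSum (fun i => f i.succ) (fun i => x i.succ) N u) = 0 := by
        unfold thetaSum
        rw [map_sum]
        refine Finset.sum_eq_zero fun m hm => ?_
        rw [map_smul, adE_pow_mul_const (hcinv m)]
        have hmA : ((adE (f 0:L))^N) (multiAd (fun i => f i.succ) m u)
            = multiAd (fun i => f i.succ) m (((adE (f 0:L))^N) u) := by
          have hcm := commute_multiAd (f 0) (fun i => f i.succ) (fun j => hcomm 0 j.succ) m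
          rw [← Module.End.mul_apply, (hcm.pow_left N).eq, Module.End.mul_apply]
        rw [hmA, hu 0, map_zero, zero_mul, smul_zero]
      rw [theta_eq (f 0) (hnil 0) (x 0) hkill]
      unfold th thetaSum
      rw [sum_piFinset_succ (range N)
        (fun m => (∏ i, genBinom (x i) (m i)) • (multiAd f m u * invPow f m))]
      refine Finset.sum_congr rfl fun n hn => ?_
      rw [map_sum, Finset.smul_sum]
      refine Finset.sum_congr rfl fun m' hm' => ?_
      rw [map_smul, smul_smul]
      have hmulti : multiAd f (Fin.cons n m') u
          = ((adE (f 0:L))^n) (multiAd (fun i => f i.succ) m' u) := by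
        rw [multiAd, List.ofFn_succ, List.prod_cons]
        simp only [Fin.cons_zero, Fin.cons_succ]
        rfl
      have hinvp : invPow f (Fin.cons n m')
          = ((((f 0)⁻¹:Lˣ)):L)^n * invPow (fun i => f i.succ) m' := by
        rw [invPow, List.ofFn_succ, List.prod_cons]
        simp only [Fin.cons_zero, Fin.cons_succ]
        rfl
      congr 1
      · rw [Fin.prod_univ_succ]
        simp only [Fin.cons_zero, Fin.cons_succ]
      · rw [Eop_pow_apply, adE_pow_mul_const (hcinv m'), hmulti, hinvp, mul_assoc]
        congr 1
        have hci : ∀ j : Fin k, ((((f 0)⁻¹:Lˣ)):L) * ((f j.succ : Lˣ):L)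
            = ((f j.succ : Lˣ):L) * ((((f 0)⁻¹:Lˣ)):L) := by
          intro j
          have hc : Commute (f 0 : L) (f j.succ : L) := hcomm 0 j.succ
          exact (hc.units_inv_left).eq
        exact (((commute_invPow ((f 0)⁻¹) (fun i => f i.succ) hci m').pow_left n).eq).symm

end Multi


/-- let `f 1, ..., f k` be commuting locally ad-nilpotent elements of
an algebra, invertible in the localization `L = D_F U` (here: units of `L`).  Then the
generalized-binomial series defines an algebra automorphism `Θ_F^x` of `L` for every
`x ∈ ℂ^k`, and `Θ_F^x ∘ Θ_F^y = Θ_F^{x+y}`. -/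
theorem exists_theta_conjugation {L : Type*} [Ring L] [Algebra ℂ L] (k : ℕ)
    (f : Fin k → Lˣ)
    (hcomm : ∀ i j, (f i : L) * (f j : L) = (f j : L) * (f i : L))
    (hnil : ∀ i (u : L), ∃ N : ℕ, ((adE ((f i : L))) ^ N) u = 0) :
    ∃ Θ : (Fin k → ℂ) → (L ≃ₐ[ℂ] L),
      (∀ (x : Fin k → ℂ) (u : L) (N : ℕ),
        (∀ i, ((adE ((f i : L))) ^ N) u = 0) → Θ x u = thetaSum f x N u) ∧
      (∀ x y : Fin k → ℂ, ∀ u : L, Θ x (Θ y u) = Θ (x + y) u) := by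
  refine ⟨fun x => ThetaFam f hnil x, ?_, ?_⟩
  · intro x u N hN
    exact ThetaFam_eq_thetaSum f hcomm hnil x u N hN
  · intro x y u
    exact ThetaFam_comp f hcomm hnil x y u
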